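/- Let X be a finite set with |X| ≥ 2 and let C be a cluster system for X. Then the following ten assertions are equivalent: (i) C is a hierarchy; (ii) C ⊆ C*; (iii) C ⊆ C_∘; (iv) every subsystem of C is a saturated patchwork; (v) every subsystem of C is a patchwork; (vi) every subsystem of C is a weak patchwork; (vii) C is a weak patchwork and C = C_extr; (viii) C_extr ⊆ C*; (ix) C* contains a maximal hierarchy on X; (x) C* is ample. -/

import Mathlib

/-- Two subsets `A`, `B` are compatible if `A ∩ B ∈ {∅, A, B}`. -/
def Compatible {α : Type*} [DecidableEq α] (A B : Finset α) : Prop :=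
  A ∩ B = ∅ ∨ A ∩ B = A ∨ A ∩ B = B

/-- A cluster system: a collection of non-empty subsets of `X`. -/
def IsCS {α : Type*} [DecidableEq α] (C : Set (Finset α)) : Prop :=
  ∀ A ∈ C, A.Nonempty

/-- The adjoint `C*`: all non-empty subsets of `X` compatible with every member of `C`. -/
def adjS {α : Type*} [DecidableEq α] (C : Set (Finset α)) : Set (Finset α) :=
  {A | A.Nonempty ∧ ∀ B ∈ C, Compatible A B}

/-- A hierarchy: a cluster system whose members are pairwise compatible. -/
def IsHierarchyS {α : Type*} [DecidableEq α] (C : Set (Finset α)) : Prop :=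
  IsCS C ∧ ∀ A ∈ C, ∀ B ∈ C, Compatible A B

/-- A maximal hierarchy: a hierarchy not properly contained in any other hierarchy. -/
def IsMaxHierarchyS {α : Type*} [DecidableEq α] (H : Set (Finset α)) : Prop :=
  IsHierarchyS H ∧ ∀ D : Set (Finset α), IsHierarchyS D → H ⊆ D → D = H

/-- A weak patchwork: incompatible members have their union in the system. -/
def IsWeakPW {α : Type*} [DecidableEq α] (C : Set (Finset α)) : Prop :=
  ∀ A ∈ C, ∀ B ∈ C, ¬Compatible A B → A ∪ B ∈ C

/-- A patchwork: incompatible members have both intersection and union in the system. -/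
def IsPW {α : Type*} [DecidableEq α] (C : Set (Finset α)) : Prop :=
  ∀ A ∈ C, ∀ B ∈ C, ¬Compatible A B → A ∩ B ∈ C ∧ A ∪ B ∈ C

/-- A saturated patchwork: for incompatible members `A`, `B`, the five sets
`A ∩ B`, `A ∪ B`, `A - B`, `B - A`, `(A ∪ B) - (A ∩ B)` lie in the system. -/
def IsSatPW {α : Type*} [DecidableEq α] (C : Set (Finset α)) : Prop :=
  ∀ A ∈ C, ∀ B ∈ C, ¬Compatible A B →
    A ∩ B ∈ C ∧ A ∪ B ∈ C ∧ A \ B ∈ C ∧ B \ A ∈ C ∧ (A ∪ B) \ (A ∩ B) ∈ C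

/-- The trivial cluster system: all singletons together with `X` itself. -/
def CtrivS (α : Type*) [Fintype α] [DecidableEq α] : Set (Finset α) :=
  {A | (∃ x : α, A = {x}) ∨ A = Finset.univ}

/-- `C` is ample: for every arc `(C₂, C₁)` of the Hasse diagram (i.e. `C₂ ⊊ C₁`
with nothing of `C` strictly between), `C₁ - C₂ ∈ C`. -/
def IsAmpleS {α : Type*} [DecidableEq α] (C : Set (Finset α)) : Prop :=
  ∀ C₁ ∈ C, ∀ C₂ ∈ C, C₂ ⊂ C₁ → (∀ B ∈ C, ¬(C₂ ⊂ B ∧ B ⊂ C₁)) → C₁ \ C₂ ∈ C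

/-- `C_extr`: the members of `C` that are not the union of two incompatible members. -/
def extrS {α : Type*} [DecidableEq α] (C : Set (Finset α)) : Set (Finset α) :=
  {A ∈ C | ¬∃ B ∈ C, ∃ B' ∈ C, ¬Compatible B B' ∧ A = B ∪ B'}
section Stmt11Aux
variable {α : Type*} [DecidableEq α]

lemma compat_symm {A B : Finset α} (h : Compatible A B) : Compatible B A := by
  unfold Compatible at *; rw [Finset.inter_comm]; tauto

lemma singleton_mem_adj (x : α) (C : Set (Finset α)) : ({x} : Finset α) ∈ adjS C := by
  refine ⟨Finset.singleton_nonempty x, fun B _ => ?_⟩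
  by_cases h : x ∈ B
  · exact Or.inr (Or.inl (Finset.singleton_inter_of_mem h))
  · exact Or.inl (Finset.singleton_inter_of_notMem h)

lemma univ_mem_adj [Fintype α] [Nonempty α] (C : Set (Finset α)) :
    (Finset.univ : Finset α) ∈ adjS C :=
  ⟨Finset.univ_nonempty, fun B _ => Or.inr (Or.inr (Finset.univ_inter B))⟩

lemma hier_sub_adj {C : Set (Finset α)} (h : IsHierarchyS C) : C ⊆ adjS C :=
  fun A hA => ⟨h.1 A hA, fun B hB => h.2 A hA B hB⟩

/-- dichotomy: a member of `adjS C` containing a point of `A ∩ B` for an incompatible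
pair `A B ∈ C` is contained in `A ∩ B` or contains `A ∪ B`. -/
lemma adj_dichotomy {C : Set (Finset α)} {A B D : Finset α} (hA : A ∈ C) (hB : B ∈ C)
    (hnc : ¬Compatible A B) (hD : D ∈ adjS C) {x : α} (hxA : x ∈ A) (hxB : x ∈ B)
    (hxD : x ∈ D) : D ⊆ A ∩ B ∨ A ∪ B ⊆ D := by
  have hDA := hD.2 A hA
  have hDB := hD.2 B hB
  have h1 : D ⊆ A ∨ A ⊆ D := by
    rcases hDA with h | h | h
    · exact absurd (Finset.mem_inter.mpr ⟨hxD, hxA⟩) (by simp [h])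
    · exact Or.inl (Finset.inter_eq_left.mp h)
    · exact Or.inr (Finset.inter_eq_right.mp h)
  have h2 : D ⊆ B ∨ B ⊆ D := by
    rcases hDB with h | h | h
    · exact absurd (Finset.mem_inter.mpr ⟨hxD, hxB⟩) (by simp [h])
    · exact Or.inl (Finset.inter_eq_left.mp h)
    · exact Or.inr (Finset.inter_eq_right.mp h)
  rcases h1 with h1 | h1 <;> rcases h2 with h2 | h2
  · exact Or.inl (Finset.subset_inter h1 h2)
  · exact absurd (Or.inr (Or.inr (Finset.inter_eq_right.mpr (h2.trans h1)))) hnc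
  · exact absurd (Or.inr (Or.inl (Finset.inter_eq_left.mpr (h1.trans h2)))) hnc
  · exact Or.inr (Finset.union_subset h1 h2)

end Stmt11Aux
lemma imp_8_1 {α : Type*} [Fintype α] [DecidableEq α] {C : Set (Finset α)} (hC : IsCS C)
    (h8 : extrS C ⊆ adjS C) : IsHierarchyS C := by
  refine ⟨hC, fun A hA B hB => ?_⟩
  by_contra hnc
  set S : Set (Finset α) := {D | D ∈ C ∧ ∃ E ∈ C, ¬Compatible D E} with hS
  obtain ⟨A₀, hA₀, hmin⟩ := Set.Finite.exists_minimalFor Finset.card S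
    (Set.toFinite S) ⟨A, hA, B, hB, hnc⟩
  have hA₀extr : A₀ ∈ extrS C := by
    refine ⟨hA₀.1, fun ⟨B₁, hB₁, B₂, hB₂, hnc', heq⟩ => ?_⟩
    have hB₁S : B₁ ∈ S := ⟨hB₁, B₂, hB₂, hnc'⟩
    have hss : B₁ ⊂ A₀ := by
      rw [heq]
      refine Finset.ssubset_iff_subset_ne.mpr ⟨Finset.subset_union_left, fun he => ?_⟩
      exact hnc' (Or.inr (Or.inr (Finset.inter_eq_right.mpr
        (Finset.union_eq_left.mp he.symm))))
    have heq' := hmin hB₁S (le_of_lt (Finset.card_lt_card hss))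
    have hlt := Finset.card_lt_card hss
    omega
  obtain ⟨hA₀C, E, hE, hncE⟩ := hA₀
  exact hncE ((h8 hA₀extr).2 E hE)

lemma imp_1_9 {α : Type*} [Fintype α] [DecidableEq α] {C : Set (Finset α)}
    (h1 : IsHierarchyS C) : ∃ H : Set (Finset α), IsMaxHierarchyS H ∧ H ⊆ adjS C := by
  have hchain : ∀ c ⊆ {D : Set (Finset α) | IsHierarchyS D}, IsChain (· ⊆ ·) c →
      c.Nonempty → ∃ ub ∈ {D : Set (Finset α) | IsHierarchyS D}, ∀ s ∈ c, s ⊆ ub := by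
    intro c hcS hch _
    refine ⟨⋃₀ c, ⟨?_, ?_⟩, fun s hs => Set.subset_sUnion_of_mem hs⟩
    · intro A hA
      obtain ⟨D, hD, hAD⟩ := hA
      exact (hcS hD).1 A hAD
    · intro A hA B hB
      obtain ⟨D₁, hD₁, hAD₁⟩ := hA
      obtain ⟨D₂, hD₂, hBD₂⟩ := hB
      rcases hch.total hD₁ hD₂ with h | h
      · exact (hcS hD₂).2 A (h hAD₁) B hBD₂
      · exact (hcS hD₁).2 A hAD₁ B (h hBD₂)
  obtain ⟨H, hCH, hHmax⟩ := zorn_subset_nonempty {D | IsHierarchyS D} hchain C h1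
  exact ⟨H, ⟨hHmax.1, fun D hD hHD => Set.Subset.antisymm (hHmax.2 hD hHD) hHD⟩,
    fun A hA => ⟨hHmax.1.1 A hA, fun B hB => hHmax.1.2 A hA B (hCH hB)⟩⟩

lemma imp_9_1 {α : Type*} [Fintype α] [DecidableEq α] {C : Set (Finset α)} (hC : IsCS C)
    (h9 : ∃ H : Set (Finset α), IsMaxHierarchyS H ∧ H ⊆ adjS C) : IsHierarchyS C := by
  obtain ⟨H, ⟨⟨hHcs, hHcompat⟩, hHmax⟩, hHadj⟩ := h9
  have hCH : C ⊆ H := by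
    intro B hB
    have hins : IsHierarchyS (insert B H) := by
      constructor
      · intro A hA
        rcases hA with rfl | hA
        · exact hC A hB
        · exact hHcs A hA
      · intro A hA A' hA'
        rcases hA with rfl | hA
        · rcases hA' with rfl | hA'
          · exact Or.inr (Or.inl (Finset.inter_self _))
          · exact compat_symm ((hHadj hA').2 _ hB)
        · rcases hA' with rfl | hA'
          · exact (hHadj hA).2 _ hB
          · exact hHcompat A hA A' hA'
    have := hHmax (insert B H) hins (Set.subset_insert B H)
    rw [← this]
    exact Set.mem_insert B H
  exact ⟨hC, fun A hA B hB => hHcompat A (hCH hA) B (hCH hB)⟩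

lemma imp_2_10 {α : Type*} [Fintype α] [DecidableEq α] {C : Set (Finset α)}
    (h2 : C ⊆ adjS C) : IsAmpleS (adjS C) := by
  intro C₁ hC₁ C₂ hC₂ hss harc
  have hnsub : ¬C₁ ⊆ C₂ := fun h => hss.ne (Finset.Subset.antisymm hss.subset h)
  refine ⟨Finset.sdiff_nonempty.mpr hnsub, fun B hB => ?_⟩
  have hB1 := hC₁.2 B hB
  have hB2 := hC₂.2 B hB
  rcases hB1 with h | h | h
  · left
    have hsub : (C₁ \ C₂) ∩ B ⊆ C₁ ∩ B :=
      Finset.inter_subset_inter Finset.sdiff_subset le_rfl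
    rw [h] at hsub
    exact Finset.subset_empty.mp hsub
  · exact Or.inr (Or.inl (Finset.inter_eq_left.mpr
      (Finset.sdiff_subset.trans (Finset.inter_eq_left.mp h))))
  · -- B ⊆ C₁
    have hBC₁ : B ⊆ C₁ := Finset.inter_eq_right.mp h
    rcases hB2 with h' | h' | h'
    · refine Or.inr (Or.inr (Finset.inter_eq_right.mpr fun x hx => ?_))
      refine Finset.mem_sdiff.mpr ⟨hBC₁ hx, fun hx2 => ?_⟩
      have : x ∈ C₂ ∩ B := Finset.mem_inter.mpr ⟨hx2, hx⟩
      rw [h'] at this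
      exact absurd this (Finset.notMem_empty x)
    · -- C₂ ⊆ B
      have hC₂B : C₂ ⊆ B := Finset.inter_eq_left.mp h'
      by_cases hBeq : B = C₂
      · subst hBeq
        left
        ext x
        simp only [Finset.mem_inter, Finset.mem_sdiff, Finset.notMem_empty, iff_false]
        tauto
      by_cases hBeq1 : B = C₁
      · subst hBeq1
        exact Or.inr (Or.inl (Finset.inter_eq_left.mpr Finset.sdiff_subset))
      · exact absurd ⟨Finset.ssubset_iff_subset_ne.mpr ⟨hC₂B, Ne.symm hBeq⟩,
          Finset.ssubset_iff_subset_ne.mpr ⟨hBC₁, hBeq1⟩⟩ (harc B (h2 hB))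
    · -- B ⊆ C₂
      have hBC₂ : B ⊆ C₂ := Finset.inter_eq_right.mp h'
      left
      ext x
      simp only [Finset.mem_inter, Finset.mem_sdiff, Finset.notMem_empty, iff_false]
      exact fun ⟨⟨_, hx2⟩, hxB⟩ => hx2 (hBC₂ hxB)

lemma imp_10_1 {α : Type*} [Fintype α] [DecidableEq α] [Nonempty α] {C : Set (Finset α)}
    (hC : IsCS C) (h10 : IsAmpleS (adjS C)) : IsHierarchyS C := by
  refine ⟨hC, fun A hA B hB => ?_⟩
  by_contra hnc
  have hne1 : A ∩ B ≠ ∅ := fun h => hnc (Or.inl h)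
  have hne2 : A ∩ B ≠ A := fun h => hnc (Or.inr (Or.inl h))
  have hne3 : A ∩ B ≠ B := fun h => hnc (Or.inr (Or.inr h))
  obtain ⟨x, hx⟩ := Finset.nonempty_iff_ne_empty.mpr hne1
  obtain ⟨hxA, hxB⟩ := Finset.mem_inter.mp hx
  have hyA : ∃ y ∈ A, y ∉ B := by
    by_contra hy
    push_neg at hy
    exact hne2 (Finset.inter_eq_left.mpr hy)
  have hzB : ∃ z ∈ B, z ∉ A := by
    by_contra hz
    push_neg at hz
    exact hne3 (Finset.inter_eq_right.mpr hz)
  obtain ⟨y, hyA, hynB⟩ := hyA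
  obtain ⟨z, hzB, hznA⟩ := hzB
  -- choose C₂ maximal in adjS C with x ∈ C₂ ⊆ A ∩ B
  set S₂ : Set (Finset α) := {D | D ∈ adjS C ∧ x ∈ D ∧ D ⊆ A ∩ B} with hS₂
  have hxS₂ : ({x} : Finset α) ∈ S₂ :=
    ⟨singleton_mem_adj x C, Finset.mem_singleton_self x,
      Finset.singleton_subset_iff.mpr hx⟩
  obtain ⟨C₂, hC₂, hmax⟩ := Set.Finite.exists_maximalFor Finset.card S₂
    (Set.toFinite S₂) ⟨{x}, hxS₂⟩
  -- choose C₁ minimal in adjS C with C₂ ⊊ C₁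
  set S₁ : Set (Finset α) := {D | D ∈ adjS C ∧ C₂ ⊂ D} with hS₁
  have hunivS₁ : (Finset.univ : Finset α) ∈ S₁ := by
    refine ⟨univ_mem_adj C, Finset.ssubset_iff_subset_ne.mpr
      ⟨Finset.subset_univ C₂, fun he => ?_⟩⟩
    have : z ∈ C₂ := he ▸ Finset.mem_univ z
    exact hznA ((Finset.inter_subset_left) (hC₂.2.2 this))
  obtain ⟨C₁, hC₁, hmin⟩ := Set.Finite.exists_minimalFor Finset.card S₁
    (Set.toFinite S₁) ⟨Finset.univ, hunivS₁⟩
  have harc : ∀ E ∈ adjS C, ¬(C₂ ⊂ E ∧ E ⊂ C₁) := by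
    rintro E hE ⟨h1, h2⟩
    have hES₁ : E ∈ S₁ := ⟨hE, h1⟩
    have := hmin hES₁ (le_of_lt (Finset.card_lt_card h2))
    have := Finset.card_lt_card h2
    omega
  have hxC₁ : x ∈ C₁ := hC₁.2.subset (hC₂.2.1)
  rcases adj_dichotomy hA hB hnc hC₁.1 hxA hxB hxC₁ with hdi | hdi
  · -- C₁ ⊆ A ∩ B contradicts maximality of C₂
    have hC₁S₂ : C₁ ∈ S₂ := ⟨hC₁.1, hxC₁, hdi⟩
    have := hmax hC₁S₂ (le_of_lt (Finset.card_lt_card hC₁.2))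
    have := Finset.card_lt_card hC₁.2
    omega
  · -- A ∪ B ⊆ C₁
    have hD := h10 C₁ hC₁.1 C₂ hC₂.1 hC₁.2 harc
    have hcompat := hD.2 A hA
    have hyD : y ∈ C₁ \ C₂ := Finset.mem_sdiff.mpr
      ⟨hdi (Finset.mem_union_left B hyA),
       fun hy => hynB (Finset.inter_subset_right (hC₂.2.2 hy))⟩
    have hzD : z ∈ C₁ \ C₂ := Finset.mem_sdiff.mpr
      ⟨hdi (Finset.mem_union_right A hzB),
       fun hz => hznA (Finset.inter_subset_left (hC₂.2.2 hz))⟩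
    have hxnD : x ∉ C₁ \ C₂ := fun h => (Finset.mem_sdiff.mp h).2 hC₂.2.1
    rcases hcompat with h | h | h
    · exact absurd (h ▸ Finset.mem_inter.mpr ⟨hyD, hyA⟩) (Finset.notMem_empty y)
    · exact hznA (Finset.inter_eq_left.mp h hzD)
    · exact hxnD (Finset.inter_eq_right.mp h hxA)

/-- Ten equivalent characterizations of hierarchies. -/
theorem stmt11 {α : Type*} [Fintype α] [DecidableEq α] (hcard : 2 ≤ Fintype.card α)
    (C : Set (Finset α)) (hC : IsCS C) :
    [IsHierarchyS C,
     C ⊆ adjS C,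
     C ⊆ adjS C ∩ adjS (adjS C),
     ∀ C' ⊆ C, IsSatPW C',
     ∀ C' ⊆ C, IsPW C',
     ∀ C' ⊆ C, IsWeakPW C',
     IsWeakPW C ∧ C = extrS C,
     extrS C ⊆ adjS C,
     ∃ H : Set (Finset α), IsMaxHierarchyS H ∧ H ⊆ adjS C,
     IsAmpleS (adjS C)].TFAE := by
  have hne : Nonempty α := Fintype.card_pos_iff.mp (by omega)
  tfae_have 1 → 2 := fun h => hier_sub_adj h
  tfae_have 2 → 1 := fun h2 => ⟨hC, fun A hA B hB => (h2 hA).2 B hB⟩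
  tfae_have 2 → 3 := by
    intro h2 A hA
    exact ⟨h2 hA, hC A hA, fun B hB => compat_symm (hB.2 A hA)⟩
  tfae_have 3 → 2 := fun h3 A hA => (h3 hA).1
  tfae_have 1 → 4 := by
    intro h1 C' hsub A hA B hB hnc
    exact absurd (h1.2 A (hsub hA) B (hsub hB)) hnc
  tfae_have 4 → 5 := by
    intro h4 C' hsub A hA B hB hnc
    exact ⟨(h4 C' hsub A hA B hB hnc).1, (h4 C' hsub A hA B hB hnc).2.1⟩
  tfae_have 5 → 6 := fun h5 C' hsub A hA B hB hnc => (h5 C' hsub A hA B hB hnc).2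
  tfae_have 6 → 1 := by
    intro h6
    refine ⟨hC, fun A hA B hB => ?_⟩
    by_contra hnc
    have hsub : ({A, B} : Set (Finset α)) ⊆ C := by
      intro x hx; rcases hx with rfl | rfl <;> assumption
    have hU := h6 {A, B} hsub A (Or.inl rfl) B (Or.inr rfl) hnc
    rcases hU with hU | hU
    · exact hnc (Or.inr (Or.inr (Finset.inter_eq_right.mpr (Finset.union_eq_left.mp hU))))
    · exact hnc (Or.inr (Or.inl (Finset.inter_eq_left.mpr (Finset.union_eq_right.mp hU))))
  tfae_have 1 → 7 := by
    intro h1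
    refine ⟨fun A hA B hB hnc => absurd (h1.2 A hA B hB) hnc, ?_⟩
    ext A
    constructor
    · intro hA
      refine ⟨hA, fun ⟨B, hB, B', hB', hnc, _⟩ => absurd (h1.2 B hB B' hB') hnc⟩
    · exact fun hA => hA.1
  tfae_have 7 → 1 := by
    intro ⟨hw, hext⟩
    refine ⟨hC, fun A hA B hB => ?_⟩
    by_contra hnc
    have hU : A ∪ B ∈ C := hw A hA B hB hnc
    rw [hext] at hU
    exact hU.2 ⟨A, hA, B, hB, hnc, rfl⟩
  tfae_have 1 → 8 := fun h1 A hA => hier_sub_adj h1 hA.1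
  tfae_have 8 → 1 := fun h8 => imp_8_1 hC h8
  tfae_have 1 → 9 := fun h1 => imp_1_9 h1
  tfae_have 9 → 1 := fun h9 => imp_9_1 hC h9
  tfae_have 2 → 10 := fun h2 => imp_2_10 h2
  tfae_have 10 → 1 := fun h10 => imp_10_1 hC h10
  tfae_finish
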